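/- arXiv:2209.09190 — 2 statements merged into one kernel-verified Lean document; each statement's English description precedes it below -/
import Mathlib

section
/- Fix n ≥ 2, τ > 0 and i ∈ {1,…,n}. Let g₁,…,gₙ : ℝ → [0,∞) be bounded measurable functions with 0 < ∫_ℝ gⱼ(t) dt < ∞ for every j. Let (s_p)_{p≥1} be positive reals with s_p → ∞, let (C_p)_{p≥1} be symmetric positive definite n×n real matrices with C_p → τ² I_n entrywise, and let (E_p)_{p≥1} be symmetric positive definite (n−1)×(n−1) real matrices with E_p → τ² I_{n−1} entrywise; set A_p = s_p C_p and D_p = s_p E_p. For a symmetric positive definite m×m matrix A, let φ_A(η) = (2π)^{-m/2}(det A)^{-1/2} exp(−½ ηᵀA^{-1}η); integrals are with respect to Lebesgue measure. Then, as p → ∞, [∫_{ℝ^{n−1}} ∏_{j≠i} gⱼ(ηⱼ) φ_{D_p}(η₋ᵢ) dη₋ᵢ] · [∫_{ℝⁿ} gᵢ(ηᵢ) ∏_{j=1}^n gⱼ(ηⱼ) φ_{A_p}(η) dη] / [∫_{ℝⁿ} ∏_{j=1}^n gⱼ(ηⱼ) φ_{A_p}(η) dη]² → ∞, the denominator being strictly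 positive and finite for every p. -/
open MeasureTheory Matrix Filter Topology
open scoped ENNReal

/-- The centered Gaussian density on `ℝᵐ` with covariance matrix `A`. -/
noncomputable def gaussDensity {m : ℕ} (A : Matrix (Fin m) (Fin m) ℝ)
    (η : Fin m → ℝ) : ℝ :=
  (Real.sqrt ((2 * Real.pi) ^ m * A.det))⁻¹ * Real.exp (-(η ⬝ᵥ A⁻¹.mulVec η) / 2)



lemma my_sqrt_atTop : Tendsto Real.sqrt atTop atTop := by
  refine tendsto_atTop_atTop.mpr fun b => ⟨max 0 b ^ 2, fun a ha => ?_⟩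
  have h0 : (0:ℝ) ≤ max 0 b := le_max_left _ _
  calc b ≤ max 0 b := le_max_right _ _
    _ = Real.sqrt ((max 0 b) ^ 2) := by rw [Real.sqrt_sq h0]
    _ ≤ Real.sqrt a := Real.sqrt_le_sqrt ha

lemma my_lintegral_fin_pi : ∀ {n : ℕ} (f : Fin n → ℝ → ℝ≥0∞), (∀ i, Measurable (f i)) →
    (∫⁻ x : Fin n → ℝ, ∏ i, f i (x i)) = ∏ i, ∫⁻ t, f i t := by
  intro n
  induction n with
  | zero =>
    intro f hf
    simp [volume_pi, Measure.pi_empty_univ]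
  | succ n ih =>
    intro f hf
    have h := ((measurePreserving_piFinSuccAbove (fun _ : Fin (n+1) => (volume : Measure ℝ)) 0).symm)
    rw [volume_pi, ← h.lintegral_comp_emb (MeasurableEquiv.measurableEmbedding _)]
    simp_rw [MeasurableEquiv.piFinSuccAbove_symm_apply, Fin.insertNthEquiv,
      Fin.prod_univ_succ, Fin.insertNth_zero]
    simp only [Fin.zero_succAbove, cast_eq, Function.comp_def, Fin.cons_zero, Fin.cons_succ,
      Equiv.coe_fn_mk]
    rw [lintegral_prod_mul (f := fun t => f 0 t) (g := fun y : Fin n → ℝ => ∏ x, f x.succ (y x)) (hf 0).aemeasurable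
      (Finset.measurable_prod Finset.univ (fun i _ =>
        (hf i.succ).comp (measurable_pi_apply i))).aemeasurable]
    rw [← volume_pi, ih (fun i => f i.succ) (fun i => hf i.succ)]


lemma my_quad_nonneg {n : ℕ} {M : Matrix (Fin n) (Fin n) ℝ} (hM : M.PosDef) (η : Fin n → ℝ) :
    0 ≤ η ⬝ᵥ M.mulVec η := by
  simpa using hM.posSemidef.dotProduct_mulVec_nonneg η

lemma my_posdef_smul {n : ℕ} {M : Matrix (Fin n) (Fin n) ℝ} (hM : M.PosDef) {c : ℝ}
    (hc : 0 < c) : (c • M).PosDef := by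
  exact hM.smul hc

lemma my_smul_inv {n : ℕ} {M : Matrix (Fin n) (Fin n) ℝ} (hM : M.PosDef) {c : ℝ}
    (hc : c ≠ 0) : (c • M)⁻¹ = c⁻¹ • M⁻¹ := by
  apply Matrix.inv_eq_right_inv
  rw [Matrix.smul_mul, Matrix.mul_smul, smul_smul, Matrix.mul_nonsing_inv _ hM.det_pos.ne'.isUnit,
    mul_inv_cancel₀ hc, one_smul]

lemma my_quad_bound {n : ℕ} (M : Matrix (Fin n) (Fin n) ℝ) {R : ℝ} (hR : 0 ≤ R)
    {η : Fin n → ℝ} (hη : ∀ j, |η j| ≤ R) :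
    η ⬝ᵥ M.mulVec η ≤ R ^ 2 * ∑ x, ∑ y, |M x y| := by
  have h1 : η ⬝ᵥ M.mulVec η ≤ ∑ x, ∑ y, |η x| * |M x y| * |η y| := by
    calc η ⬝ᵥ M.mulVec η = ∑ x, ∑ y, η x * (M x y * η y) := by
          simp [dotProduct, Matrix.mulVec, Finset.mul_sum]
      _ ≤ ∑ x, ∑ y, |η x| * |M x y| * |η y| := by
          refine Finset.sum_le_sum fun x _ => Finset.sum_le_sum fun y _ => ?_
          calc η x * (M x y * η y) ≤ |η x * (M x y * η y)| := le_abs_self _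
            _ = |η x| * |M x y| * |η y| := by rw [abs_mul, abs_mul]; ring
  refine h1.trans ?_
  rw [Finset.mul_sum]
  refine Finset.sum_le_sum fun x _ => ?_
  rw [Finset.mul_sum]
  refine Finset.sum_le_sum fun y _ => ?_
  calc |η x| * |M x y| * |η y| ≤ R * |M x y| * R := by
        have := abs_nonneg (η x); have := abs_nonneg (M x y); have := abs_nonneg (η y)
        gcongr <;> [exact hη x; exact hη y]
    _ = R ^ 2 * |M x y| := by ring

lemma my_matrix_tendsto {n : ℕ} {C : ℕ → Matrix (Fin n) (Fin n) ℝ}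
    {L : Matrix (Fin n) (Fin n) ℝ} (h : ∀ x y, Tendsto (fun p => C p x y) atTop (𝓝 (L x y))) :
    Tendsto C atTop (𝓝 L) := by
  refine tendsto_pi_nhds.mpr ?_
  intro x
  rw [tendsto_pi_nhds]
  exact h x


lemma my_exists_R {f : ℝ → ℝ≥0∞} (hf : Measurable f) (h : 0 < ∫⁻ t, f t) :
    ∃ N : ℕ, 0 < volume (Function.support f ∩ Set.Icc (-(N : ℝ)) N) := by
  have hsupp : 0 < volume (Function.support f) := (lintegral_pos_iff_support hf).mp h
  by_contra hN
  push_neg at hN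
  have hz : ∀ N : ℕ, volume (Function.support f ∩ Set.Icc (-(N : ℝ)) N) = 0 :=
    fun N => le_antisymm (hN N) zero_le
  have hcov : Function.support f ⊆ ⋃ N : ℕ, Function.support f ∩ Set.Icc (-(N : ℝ)) N := by
    intro t ht
    obtain ⟨N, hN'⟩ := exists_nat_ge |t|
    exact Set.mem_iUnion.mpr ⟨N, ht, abs_le.mp hN' |>.1 |> fun h1 => ⟨by linarith [abs_le.mp hN' |>.1], (abs_le.mp hN').2⟩⟩
  have : volume (Function.support f) = 0 := by
    refine measure_mono_null hcov ?_
    exact measure_iUnion_null_iff.mpr hz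
  exact absurd this hsupp.ne'

lemma my_indicator_pos {T : Set ℝ} (hTm : MeasurableSet T) (hT : 0 < volume T)
    {u : ℝ → ℝ≥0∞} (hu : Measurable u) (hsub : ∀ t ∈ T, u t ≠ 0) :
    0 < ∫⁻ t, T.indicator u t := by
  rw [lintegral_pos_iff_support (hu.indicator hTm)]
  have hss : T ⊆ Function.support (T.indicator u) := fun t ht => by
    simp only [Function.mem_support, Set.indicator_of_mem ht]
    exact hsub t ht
  exact lt_of_lt_of_le hT (measure_mono hss)

lemma my_inv_entry_tendsto {n : ℕ} {C : ℕ → Matrix (Fin n) (Fin n) ℝ}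
    {L : Matrix (Fin n) (Fin n) ℝ} (hL : L.det ≠ 0) (h : Tendsto C atTop (𝓝 L)) (x y : Fin n) :
    Tendsto (fun p => (C p)⁻¹ x y) atTop (𝓝 (L⁻¹ x y)) := by
  have hdet : Tendsto (fun p => (C p).det) atTop (𝓝 L.det) :=
    (Continuous.matrix_det continuous_id).continuousAt.tendsto.comp h
  have hadj : Tendsto (fun p => (C p).adjugate x y) atTop (𝓝 (L.adjugate x y)) := by
    have hcont : Continuous fun M : Matrix (Fin n) (Fin n) ℝ => M.adjugate x y :=
      ((continuous_apply y).comp (continuous_apply x)).comp (continuous_id.matrix_adjugate)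
    exact hcont.continuousAt.tendsto.comp h
  have hmul := (hdet.inv₀ hL).mul hadj
  simp only [Matrix.inv_def, Ring.inverse_eq_inv', Matrix.smul_apply, smul_eq_mul]
  exact hmul

lemma my_det_tendsto {n : ℕ} {C : ℕ → Matrix (Fin n) (Fin n) ℝ}
    {L : Matrix (Fin n) (Fin n) ℝ} (h : Tendsto C atTop (𝓝 L)) :
    Tendsto (fun p => (C p).det) atTop (𝓝 L.det) :=
  (Continuous.matrix_det continuous_id).continuousAt.tendsto.comp h

lemma my_core {n : ℕ} {A : Matrix (Fin n) (Fin n) ℝ} (hA : A.PosDef)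
    (u : Fin n → ℝ → ℝ≥0∞) (hu : ∀ j, Measurable (u j))
    {R : ℝ} (hR : 0 ≤ R) (T : Fin n → Set ℝ) (hTm : ∀ j, MeasurableSet (T j))
    (hTs : ∀ j, T j ⊆ Set.Icc (-R) R) :
    (ENNReal.ofReal ((Real.sqrt ((2 * Real.pi) ^ n * A.det))⁻¹ *
        Real.exp (-(R ^ 2 * ∑ x, ∑ y, |A⁻¹ x y|) / 2)) *
      ∏ j, ∫⁻ t, (T j).indicator (u j) t
      ≤ ∫⁻ η : Fin n → ℝ, (∏ j, u j (η j)) * ENNReal.ofReal (gaussDensity A η)) ∧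
    (∫⁻ η : Fin n → ℝ, (∏ j, u j (η j)) * ENNReal.ofReal (gaussDensity A η)
      ≤ ENNReal.ofReal (Real.sqrt ((2 * Real.pi) ^ n * A.det))⁻¹ * ∏ j, ∫⁻ t, u j t) := by
  set a : ℝ := (Real.sqrt ((2 * Real.pi) ^ n * A.det))⁻¹ with ha_def
  have ha : 0 ≤ a := inv_nonneg.mpr (Real.sqrt_nonneg _)
  set c : ℝ := R ^ 2 * ∑ x, ∑ y, |A⁻¹ x y| with hc_def
  constructor
  · -- lower bound
    have key : ∀ η : Fin n → ℝ,
        (∏ j, (T j).indicator (u j) (η j)) * ENNReal.ofReal (a * Real.exp (-c / 2))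
          ≤ (∏ j, u j (η j)) * ENNReal.ofReal (gaussDensity A η) := by
      intro η
      by_cases h0 : (∏ j, (T j).indicator (u j) (η j)) = 0
      · simp [h0]
      · have hmem : ∀ j, η j ∈ T j := by
          intro j
          by_contra hj
          exact (Finset.prod_ne_zero_iff.mp h0 j (Finset.mem_univ j))
            (Set.indicator_of_notMem hj _)
        have hprod : (∏ j, (T j).indicator (u j) (η j)) = ∏ j, u j (η j) :=
          Finset.prod_congr rfl fun j _ => Set.indicator_of_mem (hmem j) _
        rw [hprod]
        refine mul_le_mul_right (ENNReal.ofReal_le_ofReal ?_) _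
        have hq : η ⬝ᵥ A⁻¹.mulVec η ≤ c := by
          refine my_quad_bound A⁻¹ hR fun j => abs_le.mpr ?_
          exact ⟨(hTs j (hmem j)).1, (hTs j (hmem j)).2⟩
        unfold gaussDensity
        rw [← ha_def]
        exact mul_le_mul_of_nonneg_left (Real.exp_le_exp.mpr (by linarith)) ha
    calc ENNReal.ofReal (a * Real.exp (-c / 2)) * ∏ j, ∫⁻ t, (T j).indicator (u j) t
        = ∫⁻ η : Fin n → ℝ,
            (∏ j, (T j).indicator (u j) (η j)) * ENNReal.ofReal (a * Real.exp (-c / 2)) := by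
          rw [lintegral_mul_const' _ _ ENNReal.ofReal_ne_top,
            my_lintegral_fin_pi _ (fun j => (hu j).indicator (hTm j)), mul_comm]
      _ ≤ ∫⁻ η : Fin n → ℝ, (∏ j, u j (η j)) * ENNReal.ofReal (gaussDensity A η) :=
          lintegral_mono key
  · -- upper bound
    have key : ∀ η : Fin n → ℝ,
        (∏ j, u j (η j)) * ENNReal.ofReal (gaussDensity A η)
          ≤ (∏ j, u j (η j)) * ENNReal.ofReal a := by
      intro η
      refine mul_le_mul_right (ENNReal.ofReal_le_ofReal ?_) _
      unfold gaussDensity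
      rw [← ha_def]
      calc a * Real.exp (-(η ⬝ᵥ A⁻¹.mulVec η) / 2) ≤ a * 1 := by
            refine mul_le_mul_of_nonneg_left ?_ ha
            rw [← Real.exp_zero]
            refine Real.exp_le_exp.mpr ?_
            have := my_quad_nonneg hA.inv η
            linarith
        _ = a := mul_one a
    calc (∫⁻ η : Fin n → ℝ, (∏ j, u j (η j)) * ENNReal.ofReal (gaussDensity A η))
        ≤ ∫⁻ η : Fin n → ℝ, (∏ j, u j (η j)) * ENNReal.ofReal a := lintegral_mono key
      _ = ENNReal.ofReal a * ∏ j, ∫⁻ t, u j t := by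
          rw [lintegral_mul_const' _ _ ENNReal.ofReal_ne_top, my_lintegral_fin_pi _ hu, mul_comm]

/-- **Theorem 5(a), deterministic form.** For bounded, integrable likelihood
contributions `gⱼ` with positive integrals, diverging scales `sₚ → ∞` and
`Cₚ → τ²Iₙ`, `Eₚ → τ²I_{n−1}` entrywise, the quantity
`p(y₋ᵢ)·∫ gᵢ∏gⱼ dN(0,Aₚ) / p(y)²` (whose denominator is strictly positive and
finite for every `p`) diverges to `∞` as `p → ∞`. Here `n = m + 1 ≥ 2`. -/
theorem av_loo_diverges
    (m : ℕ) (hm : 1 ≤ m) (τ : ℝ) (hτ : 0 < τ) (i : Fin (m + 1))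
    (g : Fin (m + 1) → ℝ → ℝ)
    (hgm : ∀ j, Measurable (g j)) (hg0 : ∀ j t, 0 ≤ g j t)
    (hgb : ∀ j, ∃ B, ∀ t, g j t ≤ B)
    (hgint : ∀ j, 0 < (∫⁻ t : ℝ, ENNReal.ofReal (g j t)) ∧
      (∫⁻ t : ℝ, ENNReal.ofReal (g j t)) < ⊤)
    (s : ℕ → ℝ) (hs : ∀ p, 0 < s p) (hsdiv : Tendsto s atTop atTop)
    (C : ℕ → Matrix (Fin (m + 1)) (Fin (m + 1)) ℝ) (hC : ∀ p, (C p).PosDef)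
    (hCc : ∀ x y, Tendsto (fun p => C p x y) atTop
      (𝓝 ((τ ^ 2 • (1 : Matrix (Fin (m + 1)) (Fin (m + 1)) ℝ)) x y)))
    (E : ℕ → Matrix (Fin m) (Fin m) ℝ) (hE : ∀ p, (E p).PosDef)
    (hEc : ∀ x y, Tendsto (fun p => E p x y) atTop
      (𝓝 ((τ ^ 2 • (1 : Matrix (Fin m) (Fin m) ℝ)) x y))) :
    (∀ p, 0 < (∫⁻ η : Fin (m + 1) → ℝ,
        ENNReal.ofReal ((∏ j, g j (η j)) * gaussDensity (s p • C p) η)) ∧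
      (∫⁻ η : Fin (m + 1) → ℝ,
        ENNReal.ofReal ((∏ j, g j (η j)) * gaussDensity (s p • C p) η)) < ⊤) ∧
    Tendsto (fun p =>
        (∫⁻ η : Fin m → ℝ,
          ENNReal.ofReal ((∏ k, g (i.succAbove k) (η k)) * gaussDensity (s p • E p) η)) *
        (∫⁻ η : Fin (m + 1) → ℝ,
          ENNReal.ofReal (g i (η i) * (∏ j, g j (η j)) * gaussDensity (s p • C p) η)) /
        (∫⁻ η : Fin (m + 1) → ℝ,
          ENNReal.ofReal ((∏ j, g j (η j)) * gaussDensity (s p • C p) η)) ^ 2)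
      atTop (𝓝 (⊤ : ℝ≥0∞)) := by
  have hπ : (0:ℝ) < Real.pi := Real.pi_pos
  -- ℝ≥0∞-valued likelihoods
  set G : Fin (m + 1) → ℝ → ℝ≥0∞ := fun j t => ENNReal.ofReal (g j t) with hGdef
  have hGm : ∀ j, Measurable (G j) := fun j => (hgm j).ennreal_ofReal
  set u₂ : Fin (m + 1) → ℝ → ℝ≥0∞ := fun j t => (if j = i then G j t else 1) * G j t
    with hu₂def
  have hu₂m : ∀ j, Measurable (u₂ j) := by
    intro j
    by_cases h : j = i
    · rw [h]
      show Measurable fun t => (if i = i then G i t else 1) * G i t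
      simp only [↓reduceIte]
      exact (hGm i).mul (hGm i)
    · simpa [hu₂def, h] using hGm j
  have hprod2 : ∀ η : Fin (m + 1) → ℝ,
      (∏ j, u₂ j (η j)) = G i (η i) * ∏ j, G j (η j) := by
    intro η
    simp only [hu₂def]
    rw [Finset.prod_mul_distrib]
    congr 1
    simpa using Finset.prod_ite_eq' Finset.univ i (fun j => G j (η j))
  -- integrand conversions
  have hconv_den : ∀ p, (∫⁻ η : Fin (m + 1) → ℝ,
        ENNReal.ofReal ((∏ j, g j (η j)) * gaussDensity (s p • C p) η))
      = ∫⁻ η : Fin (m + 1) → ℝ,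
          (∏ j, G j (η j)) * ENNReal.ofReal (gaussDensity (s p • C p) η) := by
    intro p
    refine lintegral_congr fun η => ?_
    rw [ENNReal.ofReal_mul (Finset.prod_nonneg fun j _ => hg0 j _),
      ENNReal.ofReal_prod_of_nonneg (fun j _ => hg0 j _)]
  have hconv_num2 : ∀ p, (∫⁻ η : Fin (m + 1) → ℝ,
        ENNReal.ofReal (g i (η i) * (∏ j, g j (η j)) * gaussDensity (s p • C p) η))
      = ∫⁻ η : Fin (m + 1) → ℝ,
          (∏ j, u₂ j (η j)) * ENNReal.ofReal (gaussDensity (s p • C p) η) := by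
    intro p
    refine lintegral_congr fun η => ?_
    rw [hprod2 η,
      ENNReal.ofReal_mul (mul_nonneg (hg0 i _) (Finset.prod_nonneg fun j _ => hg0 j _)),
      ENNReal.ofReal_mul (hg0 i _),
      ENNReal.ofReal_prod_of_nonneg (fun j _ => hg0 j _)]
  have hconv_num1 : ∀ p, (∫⁻ η : Fin m → ℝ,
        ENNReal.ofReal ((∏ k, g (i.succAbove k) (η k)) * gaussDensity (s p • E p) η))
      = ∫⁻ η : Fin m → ℝ,
          (∏ k, G (i.succAbove k) (η k)) * ENNReal.ofReal (gaussDensity (s p • E p) η) := by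
    intro p
    refine lintegral_congr fun η => ?_
    rw [ENNReal.ofReal_mul (Finset.prod_nonneg fun j _ => hg0 _ _),
      ENNReal.ofReal_prod_of_nonneg (fun j _ => hg0 _ _)]
  -- basic integrals
  have hI0 : ∀ j, 0 < ∫⁻ t, G j t := fun j => (hgint j).1
  have hItop : ∀ j, (∫⁻ t, G j t) < ⊤ := fun j => (hgint j).2
  -- radius and truncated supports
  have hNex : ∀ j, ∃ N : ℕ, 0 < volume (Function.support (G j) ∩ Set.Icc (-(N : ℝ)) N) :=
    fun j => my_exists_R (hGm j) (hI0 j)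
  choose N hN using hNex
  set R : ℝ := ((Finset.univ.sup N : ℕ) : ℝ) with hRdef
  have hR : 0 ≤ R := Nat.cast_nonneg _
  set T : Fin (m + 1) → Set ℝ := fun j => Function.support (G j) ∩ Set.Icc (-R) R with hTdef
  have hTm : ∀ j, MeasurableSet (T j) := by
    intro j
    refine MeasurableSet.inter ?_ measurableSet_Icc
    rw [Function.support_eq_preimage]
    exact (hGm j) (measurableSet_singleton 0).compl
  have hTsub : ∀ j, T j ⊆ Set.Icc (-R) R := fun j => Set.inter_subset_right
  have hT0 : ∀ j, 0 < volume (T j) := by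
    intro j
    refine lt_of_lt_of_le (hN j) (measure_mono ?_)
    refine Set.inter_subset_inter_right _ (Set.Icc_subset_Icc ?_ ?_)
    · exact neg_le_neg (Nat.cast_le.mpr (Finset.le_sup (Finset.mem_univ j)))
    · exact Nat.cast_le.mpr (Finset.le_sup (Finset.mem_univ j))
  -- truncated integrals
  have hκ0 : ∀ j, 0 < ∫⁻ t, (T j).indicator (G j) t :=
    fun j => my_indicator_pos (hTm j) (hT0 j) (hGm j) (fun t ht => ht.1)
  have hκtop : ∀ j, (∫⁻ t, (T j).indicator (G j) t) < ⊤ := fun j =>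
    lt_of_le_of_lt (lintegral_mono fun t => Set.indicator_le_self _ _ t) (hItop j)
  have hκ₂0 : ∀ j, 0 < ∫⁻ t, (T j).indicator (u₂ j) t := by
    intro j
    refine my_indicator_pos (hTm j) (hT0 j) (hu₂m j) ?_
    intro t ht
    have hGne : G j t ≠ 0 := ht.1
    by_cases h : j = i
    · subst h; simp [hu₂def, hGne]
    · simp [hu₂def, h, hGne]
  have hκ₂top : ∀ j, (∫⁻ t, (T j).indicator (u₂ j) t) < ⊤ := by
    intro j
    obtain ⟨B, hB⟩ := hgb i
    have hB1 : ∀ t, g i t ≤ max B 1 := fun t => (hB t).trans (le_max_left _ _)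
    have h1B : (1 : ℝ≥0∞) ≤ ENNReal.ofReal (max B 1) := by
      rw [show (1 : ℝ≥0∞) = ENNReal.ofReal 1 by simp]
      exact ENNReal.ofReal_le_ofReal (le_max_right _ _)
    have hle : ∀ t, (T j).indicator (u₂ j) t ≤ ENNReal.ofReal (max B 1) * G j t := by
      intro t
      refine le_trans (Set.indicator_le_self _ _ t) ?_
      simp only [hu₂def]
      refine mul_le_mul_left ?_ _
      by_cases h : j = i
      · subst h
        rw [if_pos rfl]
        exact le_trans (ENNReal.ofReal_le_ofReal (hB1 t)) le_rfl
      · rw [if_neg h]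
        exact h1B
    calc (∫⁻ t, (T j).indicator (u₂ j) t) ≤ ∫⁻ t, ENNReal.ofReal (max B 1) * G j t :=
          lintegral_mono hle
      _ = ENNReal.ofReal (max B 1) * ∫⁻ t, G j t :=
          lintegral_const_mul' _ _ ENNReal.ofReal_ne_top
      _ < ⊤ := ENNReal.mul_lt_top ENNReal.ofReal_lt_top (hItop j)
  -- products
  have hP10 : (∏ k : Fin m, ∫⁻ t, (T (i.succAbove k)).indicator (G (i.succAbove k)) t) ≠ 0 :=
    (CanonicallyOrderedAdd.prod_pos.mpr fun k _ => hκ0 _).ne'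
  have hP1top : (∏ k : Fin m, ∫⁻ t, (T (i.succAbove k)).indicator (G (i.succAbove k)) t) ≠ ⊤ :=
    (ENNReal.prod_lt_top fun k _ => hκtop _).ne
  have hP20 : (∏ j, ∫⁻ t, (T j).indicator (u₂ j) t) ≠ 0 :=
    (CanonicallyOrderedAdd.prod_pos.mpr fun j _ => hκ₂0 _).ne'
  have hP2top : (∏ j, ∫⁻ t, (T j).indicator (u₂ j) t) ≠ ⊤ :=
    (ENNReal.prod_lt_top fun j _ => hκ₂top _).ne
  have hPκ0 : (∏ j, ∫⁻ t, (T j).indicator (G j) t) ≠ 0 :=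
    (CanonicallyOrderedAdd.prod_pos.mpr fun j _ => hκ0 _).ne'
  have hkI0 : (∏ j, ∫⁻ t, G j t) ≠ 0 :=
    (CanonicallyOrderedAdd.prod_pos.mpr fun j _ => hI0 _).ne'
  have hkItop : (∏ j, ∫⁻ t, G j t) ≠ ⊤ :=
    (ENNReal.prod_lt_top fun j _ => hItop _).ne
  -- positive definiteness of scaled matrices
  have hACpd : ∀ p, (s p • C p).PosDef := fun p => my_posdef_smul (hC p) (hs p)
  have hAEpd : ∀ p, (s p • E p).PosDef := fun p => my_posdef_smul (hE p) (hs p)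
  -- scalar constants
  set aC : ℕ → ℝ := fun p => (Real.sqrt ((2 * Real.pi) ^ (m + 1) * (s p • C p).det))⁻¹
    with haCdef
  set aE : ℕ → ℝ := fun p => (Real.sqrt ((2 * Real.pi) ^ m * (s p • E p).det))⁻¹ with haEdef
  set cC : ℕ → ℝ := fun p => R ^ 2 * ∑ x, ∑ y, |(s p • C p)⁻¹ x y| with hcCdef
  set cE : ℕ → ℝ := fun p => R ^ 2 * ∑ x, ∑ y, |(s p • E p)⁻¹ x y| with hcEdef
  have haC0 : ∀ p, 0 < aC p := fun p => inv_pos.mpr (Real.sqrt_pos.mpr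
    (mul_pos (pow_pos (by linarith) _) (hACpd p).det_pos))
  have haE0 : ∀ p, 0 < aE p := fun p => inv_pos.mpr (Real.sqrt_pos.mpr
    (mul_pos (pow_pos (by linarith) _) (hAEpd p).det_pos))
  -- core bounds
  have hDlow : ∀ p, ENNReal.ofReal (aC p * Real.exp (-(cC p) / 2)) *
        (∏ j, ∫⁻ t, (T j).indicator (G j) t)
      ≤ ∫⁻ η : Fin (m + 1) → ℝ,
          ENNReal.ofReal ((∏ j, g j (η j)) * gaussDensity (s p • C p) η) := by
    intro p
    rw [hconv_den p]
    exact (my_core (hACpd p) G hGm hR T hTm hTsub).1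
  have hDup : ∀ p, (∫⁻ η : Fin (m + 1) → ℝ,
        ENNReal.ofReal ((∏ j, g j (η j)) * gaussDensity (s p • C p) η))
      ≤ ENNReal.ofReal (aC p) * ∏ j, ∫⁻ t, G j t := by
    intro p
    rw [hconv_den p]
    exact (my_core (hACpd p) G hGm hR T hTm hTsub).2
  have hN2low : ∀ p, ENNReal.ofReal (aC p * Real.exp (-(cC p) / 2)) *
        (∏ j, ∫⁻ t, (T j).indicator (u₂ j) t)
      ≤ ∫⁻ η : Fin (m + 1) → ℝ,
          ENNReal.ofReal (g i (η i) * (∏ j, g j (η j)) * gaussDensity (s p • C p) η) := by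
    intro p
    rw [hconv_num2 p]
    exact (my_core (hACpd p) u₂ hu₂m hR T hTm hTsub).1
  have hN1low : ∀ p, ENNReal.ofReal (aE p * Real.exp (-(cE p) / 2)) *
        (∏ k : Fin m, ∫⁻ t, (T (i.succAbove k)).indicator (G (i.succAbove k)) t)
      ≤ ∫⁻ η : Fin m → ℝ,
          ENNReal.ofReal ((∏ k, g (i.succAbove k) (η k)) * gaussDensity (s p • E p) η) := by
    intro p
    rw [hconv_num1 p]
    exact (my_core (hAEpd p) (fun k => G (i.succAbove k)) (fun k => hGm _) hR
      (fun k => T (i.succAbove k)) (fun k => hTm _) (fun k => hTsub _)).1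
  -- part 1
  have hDpos : ∀ p, 0 < ∫⁻ η : Fin (m + 1) → ℝ,
      ENNReal.ofReal ((∏ j, g j (η j)) * gaussDensity (s p • C p) η) := by
    intro p
    refine lt_of_lt_of_le ?_ (hDlow p)
    exact ENNReal.mul_pos (ENNReal.ofReal_pos.mpr
      (mul_pos (haC0 p) (Real.exp_pos _))).ne' hPκ0
  have hDtop : ∀ p, (∫⁻ η : Fin (m + 1) → ℝ,
      ENNReal.ofReal ((∏ j, g j (η j)) * gaussDensity (s p • C p) η)) < ⊤ := by
    intro p
    exact lt_of_le_of_lt (hDup p)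
      (ENNReal.mul_lt_top ENNReal.ofReal_lt_top hkItop.lt_top)
  refine ⟨fun p => ⟨hDpos p, hDtop p⟩, ?_⟩
  -- limits of matrix quantities
  have hCt : Tendsto C atTop (𝓝 (τ ^ 2 • (1 : Matrix (Fin (m + 1)) (Fin (m + 1)) ℝ))) :=
    my_matrix_tendsto hCc
  have hEt : Tendsto E atTop (𝓝 (τ ^ 2 • (1 : Matrix (Fin m) (Fin m) ℝ))) :=
    my_matrix_tendsto hEc
  have hLCdet : ((τ ^ 2 • (1 : Matrix (Fin (m + 1)) (Fin (m + 1)) ℝ))).det = (τ ^ 2) ^ (m + 1) := by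
    rw [Matrix.det_smul, Matrix.det_one, Fintype.card_fin, mul_one]
  have hLEdet : ((τ ^ 2 • (1 : Matrix (Fin m) (Fin m) ℝ))).det = (τ ^ 2) ^ m := by
    rw [Matrix.det_smul, Matrix.det_one, Fintype.card_fin, mul_one]
  have hdetC : Tendsto (fun p => (C p).det) atTop (𝓝 ((τ ^ 2) ^ (m + 1))) := by
    have := my_det_tendsto hCt; rwa [hLCdet] at this
  have hdetE : Tendsto (fun p => (E p).det) atTop (𝓝 ((τ ^ 2) ^ m)) := by
    have := my_det_tendsto hEt; rwa [hLEdet] at this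
  have hLCdet0 : ((τ ^ 2 • (1 : Matrix (Fin (m + 1)) (Fin (m + 1)) ℝ))).det ≠ 0 := by
    rw [hLCdet]; positivity
  have hLEdet0 : ((τ ^ 2 • (1 : Matrix (Fin m) (Fin m) ℝ))).det ≠ 0 := by
    rw [hLEdet]; positivity
  -- cC, cE → 0
  have htermC : ∀ (x y : Fin (m + 1)),
      Tendsto (fun p => |(s p • C p)⁻¹ x y|) atTop (𝓝 0) := by
    intro x y
    have heq : ∀ p, (s p • C p)⁻¹ x y = (s p)⁻¹ * (C p)⁻¹ x y := by
      intro p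
      rw [my_smul_inv (hC p) (hs p).ne', Matrix.smul_apply, smul_eq_mul]
    have h1 : Tendsto (fun p => (s p)⁻¹ * (C p)⁻¹ x y) atTop
        (𝓝 (0 * (τ ^ 2 • (1 : Matrix (Fin (m + 1)) (Fin (m + 1)) ℝ))⁻¹ x y)) :=
      (hsdiv.inv_tendsto_atTop).mul (my_inv_entry_tendsto hLCdet0 hCt x y)
    rw [zero_mul] at h1
    have h2 := h1.abs
    rw [abs_zero] at h2
    simp only [heq]
    exact h2
  have htermE : ∀ (x y : Fin m),
      Tendsto (fun p => |(s p • E p)⁻¹ x y|) atTop (𝓝 0) := by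
    intro x y
    have heq : ∀ p, (s p • E p)⁻¹ x y = (s p)⁻¹ * (E p)⁻¹ x y := by
      intro p
      rw [my_smul_inv (hE p) (hs p).ne', Matrix.smul_apply, smul_eq_mul]
    have h1 : Tendsto (fun p => (s p)⁻¹ * (E p)⁻¹ x y) atTop
        (𝓝 (0 * (τ ^ 2 • (1 : Matrix (Fin m) (Fin m) ℝ))⁻¹ x y)) :=
      (hsdiv.inv_tendsto_atTop).mul (my_inv_entry_tendsto hLEdet0 hEt x y)
    rw [zero_mul] at h1
    have h2 := h1.abs
    rw [abs_zero] at h2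
    simp only [heq]
    exact h2
  have hcC0 : Tendsto cC atTop (𝓝 0) := by
    have hsum : Tendsto (fun p => ∑ x, ∑ y, |(s p • C p)⁻¹ x y|) atTop (𝓝 0) := by
      have := tendsto_finset_sum (Finset.univ : Finset (Fin (m + 1)))
        (fun x _ => tendsto_finset_sum (Finset.univ : Finset (Fin (m + 1)))
          (fun y _ => htermC x y))
      simpa using this
    have := hsum.const_mul (R ^ 2)
    simpa [hcCdef] using this
  have hcE0 : Tendsto cE atTop (𝓝 0) := by
    have hsum : Tendsto (fun p => ∑ x, ∑ y, |(s p • E p)⁻¹ x y|) atTop (𝓝 0) := by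
      have := tendsto_finset_sum (Finset.univ : Finset (Fin m))
        (fun x _ => tendsto_finset_sum (Finset.univ : Finset (Fin m))
          (fun y _ => htermE x y))
      simpa using this
    have := hsum.const_mul (R ^ 2)
    simpa [hcEdef] using this
  -- exponential factors → 1
  have he₂ : Tendsto (fun p => Real.exp (-(cC p) / 2)) atTop (𝓝 1) := by
    have harg : Tendsto (fun p => -(cC p) / 2) atTop (𝓝 0) := by
      have := (hcC0.neg).div_const 2
      simpa using this
    have := (Real.continuous_exp.tendsto 0).comp harg
    simpa [Function.comp_def, Real.exp_zero] using this
  have he₁ : Tendsto (fun p => Real.exp (-(cE p) / 2)) atTop (𝓝 1) := by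
    have harg : Tendsto (fun p => -(cE p) / 2) atTop (𝓝 0) := by
      have := (hcE0.neg).div_const 2
      simpa using this
    have := (Real.continuous_exp.tendsto 0).comp harg
    simpa [Function.comp_def, Real.exp_zero] using this
  -- ratio aE/aC → ∞
  have hr : Tendsto (fun p => aE p / aC p) atTop atTop := by
    have heq : ∀ p, aE p / aC p = Real.sqrt
        (((2 * Real.pi) ^ (m + 1) * (s p • C p).det) /
          ((2 * Real.pi) ^ m * (s p • E p).det)) := by
      intro p
      rw [haCdef, haEdef]
      simp only []
      rw [inv_div_inv, Real.sqrt_div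
        (mul_nonneg (pow_nonneg (by linarith) _) (hACpd p).det_pos.le)]
    have hq : Tendsto (fun p => ((2 * Real.pi) ^ (m + 1) * (s p • C p).det) /
        ((2 * Real.pi) ^ m * (s p • E p).det)) atTop atTop := by
      have heq2 : ∀ p, ((2 * Real.pi) ^ (m + 1) * (s p • C p).det) /
          ((2 * Real.pi) ^ m * (s p • E p).det)
          = (2 * Real.pi * s p) * ((C p).det / (E p).det) := by
        intro p
        rw [Matrix.det_smul, Matrix.det_smul, Fintype.card_fin, Fintype.card_fin]
        have h1 : (2 * Real.pi) ≠ 0 := by linarith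
        have h2 : s p ≠ 0 := (hs p).ne'
        have h3 : (E p).det ≠ 0 := (hE p).det_pos.ne'
        field_simp
        ring
      have hfac1 : Tendsto (fun p => 2 * Real.pi * s p) atTop atTop :=
        hsdiv.const_mul_atTop (by linarith)
      have hfac2 : Tendsto (fun p => (C p).det / (E p).det) atTop
          (𝓝 ((τ ^ 2) ^ (m + 1) / (τ ^ 2) ^ m)) :=
        hdetC.div hdetE (by positivity)
      have hpos : (0:ℝ) < (τ ^ 2) ^ (m + 1) / (τ ^ 2) ^ m := by positivity
      have := Filter.Tendsto.atTop_mul_pos hpos hfac1 hfac2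
      simp only [heq2]
      exact this
    have := my_sqrt_atTop.comp hq
    simp only [Function.comp_def] at this
    simp only [heq]
    exact this
  -- real-valued product constants
  have hpr0 : (0:ℝ) < ((∏ k : Fin m, ∫⁻ t, (T (i.succAbove k)).indicator (G (i.succAbove k)) t) *
      (∏ j, ∫⁻ t, (T j).indicator (u₂ j) t)).toReal :=
    ENNReal.toReal_pos (mul_ne_zero hP10 hP20) (ENNReal.mul_ne_top hP1top hP2top)
  set pr : ℝ := ((∏ k : Fin m, ∫⁻ t, (T (i.succAbove k)).indicator (G (i.succAbove k)) t) *
      (∏ j, ∫⁻ t, (T j).indicator (u₂ j) t)).toReal with hprdef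
  set kr : ℝ := (∏ j, ∫⁻ t, G j t).toReal with hkrdef
  have hkr0 : 0 < kr := ENNReal.toReal_pos hkI0 hkItop
  have hkIeq : (∏ j, ∫⁻ t, G j t) = ENNReal.ofReal kr :=
    (ENNReal.ofReal_toReal hkItop).symm
  have hPeq : (∏ k : Fin m, ∫⁻ t, (T (i.succAbove k)).indicator (G (i.succAbove k)) t) *
      (∏ j, ∫⁻ t, (T j).indicator (u₂ j) t) = ENNReal.ofReal pr :=
    (ENNReal.ofReal_toReal (ENNReal.mul_ne_top hP1top hP2top)).symm
  -- the diverging scalar lower bound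
  have hF : Tendsto (fun p => aE p / aC p *
      (Real.exp (-(cE p) / 2) * Real.exp (-(cC p) / 2)) * pr) atTop atTop := by
    have h1 : Tendsto (fun p => aE p / aC p *
        (Real.exp (-(cE p) / 2) * Real.exp (-(cC p) / 2))) atTop atTop :=
      Filter.Tendsto.atTop_mul_pos (by norm_num) hr (he₁.mul he₂)
    exact Filter.Tendsto.atTop_mul_pos hpr0 h1 tendsto_const_nhds
  -- conclusion
  rw [ENNReal.tendsto_nhds_top_iff_nnreal]
  intro ν
  have hM0 : (0:ℝ) ≤ (ν : ℝ) + 1 := by positivity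
  filter_upwards [hF.eventually_ge_atTop (((ν : ℝ) + 1) * kr ^ 2)] with p hp
  have hreal : ((ν : ℝ) + 1) * (aC p * kr) ^ 2
      ≤ (aE p * Real.exp (-(cE p) / 2)) * ((aC p * Real.exp (-(cC p) / 2)) * pr) := by
    have h := mul_le_mul_of_nonneg_left hp (sq_nonneg (aC p))
    have haCne : aC p ≠ 0 := (haC0 p).ne'
    calc ((ν : ℝ) + 1) * (aC p * kr) ^ 2 = aC p ^ 2 * (((ν : ℝ) + 1) * kr ^ 2) := by ring
      _ ≤ aC p ^ 2 * (aE p / aC p *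
            (Real.exp (-(cE p) / 2) * Real.exp (-(cC p) / 2)) * pr) := h
      _ = (aE p * Real.exp (-(cE p) / 2)) * ((aC p * Real.exp (-(cC p) / 2)) * pr) := by
          field_simp
  have hD2 : ((∫⁻ η : Fin (m + 1) → ℝ,
      ENNReal.ofReal ((∏ j, g j (η j)) * gaussDensity (s p • C p) η)) ^ 2) ≠ 0 :=
    pow_ne_zero _ (hDpos p).ne'
  have hD2t : ((∫⁻ η : Fin (m + 1) → ℝ,
      ENNReal.ofReal ((∏ j, g j (η j)) * gaussDensity (s p • C p) η)) ^ 2) ≠ ⊤ :=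
    (ENNReal.pow_lt_top (hDtop p)).ne
  calc (↑ν : ℝ≥0∞) < ENNReal.ofReal ((ν : ℝ) + 1) := by
        rw [← ENNReal.ofReal_coe_nnreal]
        exact (ENNReal.ofReal_lt_ofReal_iff (by positivity)).mpr (lt_add_one _)
    _ ≤ _ := by
        rw [ENNReal.le_div_iff_mul_le (Or.inl hD2) (Or.inl hD2t)]
        calc ENNReal.ofReal ((ν : ℝ) + 1) * (∫⁻ η : Fin (m + 1) → ℝ,
              ENNReal.ofReal ((∏ j, g j (η j)) * gaussDensity (s p • C p) η)) ^ 2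
            ≤ ENNReal.ofReal ((ν : ℝ) + 1) *
              (ENNReal.ofReal (aC p) * ∏ j, ∫⁻ t, G j t) ^ 2 := by
              gcongr
              exact hDup p
          _ = ENNReal.ofReal (((ν : ℝ) + 1) * (aC p * kr) ^ 2) := by
              rw [hkIeq, ← ENNReal.ofReal_mul (haC0 p).le,
                ← ENNReal.ofReal_pow (mul_nonneg (haC0 p).le hkr0.le),
                ← ENNReal.ofReal_mul hM0]
          _ ≤ ENNReal.ofReal ((aE p * Real.exp (-(cE p) / 2)) *
              ((aC p * Real.exp (-(cC p) / 2)) * pr)) := ENNReal.ofReal_le_ofReal hreal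
          _ = ENNReal.ofReal (aE p * Real.exp (-(cE p) / 2)) *
              (ENNReal.ofReal (aC p * Real.exp (-(cC p) / 2)) * ENNReal.ofReal pr) := by
              rw [ENNReal.ofReal_mul (mul_nonneg (haE0 p).le (Real.exp_pos _).le),
                ENNReal.ofReal_mul (mul_nonneg (haC0 p).le (Real.exp_pos _).le)]
          _ = (ENNReal.ofReal (aE p * Real.exp (-(cE p) / 2)) *
                ∏ k : Fin m, ∫⁻ t, (T (i.succAbove k)).indicator (G (i.succAbove k)) t) *
              (ENNReal.ofReal (aC p * Real.exp (-(cC p) / 2)) *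
                ∏ j, ∫⁻ t, (T j).indicator (u₂ j) t) := by
              rw [← hPeq]; ring
          _ ≤ _ := mul_le_mul' (hN1low p) (hN2low p)
end

section
/- Fix n ≥ 1, τ > 0 and i ∈ {1,…,n}. Let g₁,…,gₙ : ℝ → (0,∞) be bounded measurable functions such that for every j the limits aⱼ = lim_{t→−∞} gⱼ(t) and bⱼ = lim_{t→+∞} gⱼ(t) exist in [0,∞) with aⱼ + bⱼ > 0, and assume aᵢ bᵢ = 0 (i.e. gᵢ vanishes in at least one direction). Let (s_p)_{p≥1} be positive reals with s_p → ∞, and let (B_p)_{p≥1} be symmetric positive definite n×n real matrices with B_p → τ² I_n entrywise; set A_p = s_p B_p. For a symmetric positive definite n×n matrix A, let φ_A(η) = (2π)^{-n/2}(det A)^{-1/2} exp(−½ ηᵀA^{-1}η); integrals are with respect to Lebesgue measure. Then ∫_{ℝⁿ} gᵢ(ηᵢ)^{-1} ∏_{j≠i} gⱼ(ηⱼ) φ_{A_p}(η) dη → ∞ as p → ∞. -/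
open MeasureTheory Matrix Filter Topology Finset
open scoped ENNReal

lemma quad_form_bound {n : ℕ} (M : Matrix (Fin n) (Fin n) ℝ) (η : Fin n → ℝ) (R : ℝ)
    (hR : 0 ≤ R) (hη : ∀ j, |η j| ≤ R) :
    η ⬝ᵥ M.mulVec η ≤ R ^ 2 * ∑ j, ∑ k, |M j k| := by
  have h : η ⬝ᵥ M.mulVec η = ∑ j, ∑ k, η j * (M j k * η k) := by
    simp [dotProduct, Matrix.mulVec, Finset.mul_sum]
  rw [h, Finset.mul_sum]
  refine Finset.sum_le_sum fun j _ => ?_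
  rw [Finset.mul_sum]
  refine Finset.sum_le_sum fun k _ => ?_
  calc η j * (M j k * η k) ≤ |η j * (M j k * η k)| := le_abs_self _
    _ = |η j| * |M j k| * |η k| := by rw [abs_mul, abs_mul]; ring
    _ ≤ R * |M j k| * R := by
        have h1 := abs_nonneg (M j k)
        have h2 := abs_nonneg (η k)
        have h3 := abs_nonneg (η j)
        gcongr
        · exact hη j
        · exact hη k
    _ = R ^ 2 * |M j k| := by ring

lemma sqrt_tendsto_aux {s : ℕ → ℝ} (hsdiv : Tendsto s atTop atTop) (T : ℝ) :
    ∀ᶠ p in atTop, T ≤ Real.sqrt (s p) := by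
  filter_upwards [hsdiv.eventually_ge_atTop ((max T 0) ^ 2)] with p hp
  calc T ≤ max T 0 := le_max_left _ _
    _ ≤ Real.sqrt (s p) := Real.le_sqrt_of_sq_le hp

set_option maxHeartbeats 2000000 in
/-- **Divergence of the classical posterior estimator, Theorem 5(b).** For strictly
positive bounded likelihood contributions `gⱼ` with limits `aⱼ`, `bⱼ` at `∓∞`
satisfying `aⱼ + bⱼ > 0` and `aᵢbᵢ = 0`, diverging scales `sₚ → ∞` and `Bₚ → τ²Iₙ`
entrywise, the integral `∫ gᵢ(ηᵢ)⁻¹ ∏_{j≠i} gⱼ(ηⱼ) φ_{sₚBₚ}(η) dη` diverges. -/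
theorem posterior_variance_diverges_flat_prior
    (n : ℕ) (hn : 1 ≤ n) (τ : ℝ) (hτ : 0 < τ) (i : Fin n)
    (g : Fin n → ℝ → ℝ)
    (hgm : ∀ j, Measurable (g j)) (hg0 : ∀ j t, 0 < g j t)
    (hgb : ∀ j, ∃ B, ∀ t, g j t ≤ B)
    (a b : Fin n → ℝ) (ha0 : ∀ j, 0 ≤ a j) (hb0 : ∀ j, 0 ≤ b j)
    (ha : ∀ j, Tendsto (g j) atBot (𝓝 (a j)))
    (hb : ∀ j, Tendsto (g j) atTop (𝓝 (b j)))
    (hab : ∀ j, 0 < a j + b j) (hi : a i * b i = 0)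
    (s : ℕ → ℝ) (hs : ∀ p, 0 < s p) (hsdiv : Tendsto s atTop atTop)
    (B : ℕ → Matrix (Fin n) (Fin n) ℝ) (hB : ∀ p, (B p).PosDef)
    (hBc : ∀ x y, Tendsto (fun p => B p x y) atTop
      (𝓝 ((τ ^ 2 • (1 : Matrix (Fin n) (Fin n) ℝ)) x y))) :
    Tendsto (fun p => ∫⁻ η : Fin n → ℝ,
        ENNReal.ofReal ((g i (η i))⁻¹ * (∏ j ∈ Finset.univ.erase i, g j (η j)) *
          gaussDensity (s p • B p) η))
      atTop (𝓝 (⊤ : ℝ≥0∞)) := by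
  classical
  haveI : Nonempty (Fin n) := ⟨i⟩
  -- directional data
  have main : ∀ j : Fin n, ∃ (up : Bool) (c T : ℝ), 0 < c ∧
      (j ≠ i → ∀ t : ℝ, (if up then T ≤ t else t ≤ -T) → c ≤ g j t) ∧
      (j = i → ∀ ε : ℝ, 0 < ε → ∃ T' : ℝ, ∀ t : ℝ,
        (if up then T' ≤ t else t ≤ -T') → g j t ≤ ε) := by
    intro j
    by_cases hji : j = i
    · subst hji
      by_cases hbi : b j = 0
      · refine ⟨true, 1, 0, one_pos, fun h => absurd rfl h, fun _ ε hε => ?_⟩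
        have hev : ∀ᶠ t in atTop, g j t ≤ ε := by
          have h := hb j
          rw [hbi] at h
          exact h.eventually (eventually_le_nhds hε)
        obtain ⟨T', hT'⟩ := eventually_atTop.1 hev
        exact ⟨T', fun t ht => hT' t (by simpa using ht)⟩
      · have hai : a j = 0 := by
          rcases mul_eq_zero.1 hi with h | h
          · exact h
          · exact absurd h hbi
        refine ⟨false, 1, 0, one_pos, fun h => absurd rfl h, fun _ ε hε => ?_⟩
        have hev : ∀ᶠ t in atBot, g j t ≤ ε := by
          have h := ha j
          rw [hai] at h
          exact h.eventually (eventually_le_nhds hε)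
        obtain ⟨T0, hT0⟩ := eventually_atBot.1 hev
        exact ⟨-T0, fun t ht => hT0 t (by simpa using ht)⟩
    · by_cases hbj : 0 < b j
      · have hev : ∀ᶠ t in atTop, b j / 2 ≤ g j t :=
          (hb j).eventually (eventually_ge_nhds (by linarith))
        obtain ⟨T, hT⟩ := eventually_atTop.1 hev
        exact ⟨true, b j / 2, T, by linarith, fun _ t ht => hT t (by simpa using ht),
          fun h => absurd h hji⟩
      · have hbj0 : b j = 0 := le_antisymm (not_lt.1 hbj) (hb0 j)
        have haj : 0 < a j := by have := hab j; linarith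
        have hev : ∀ᶠ t in atBot, a j / 2 ≤ g j t :=
          (ha j).eventually (eventually_ge_nhds (by linarith))
        obtain ⟨T0, hT0⟩ := eventually_atBot.1 hev
        exact ⟨false, a j / 2, -T0, by linarith, fun _ t ht => hT0 t (by simpa using ht),
          fun h => absurd h hji⟩
  choose up c T hcpos hcbound hibound using main
  have hii := hibound i rfl
  set cp : ℝ := ∏ j ∈ Finset.univ.erase i, c j with hcp_def
  have hcp : 0 < cp := Finset.prod_pos fun j _ => hcpos j
  obtain ⟨T₀, hT₀⟩ := Finite.exists_le T
  -- matrix limits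
  have hBt : Tendsto B atTop (𝓝 (τ ^ 2 • (1 : Matrix (Fin n) (Fin n) ℝ))) := by
    apply tendsto_pi_nhds.2
    intro x
    rw [tendsto_pi_nhds]
    intro y
    exact hBc x y
  have hdetlim : Tendsto (fun p => (B p).det) atTop (𝓝 ((τ ^ 2) ^ n)) := by
    have hcont : Continuous fun A : Matrix (Fin n) (Fin n) ℝ => A.det :=
      continuous_id.matrix_det
    have h := (hcont.tendsto _).comp hBt
    simpa [Function.comp_def, Matrix.det_smul, Fintype.card_fin] using h
  have hτn : (0 : ℝ) < (τ ^ 2) ^ n := by positivity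
  have hinvlim : Tendsto (fun p => (B p)⁻¹) atTop
      (𝓝 (τ ^ 2 • (1 : Matrix (Fin n) (Fin n) ℝ))⁻¹) := by
    have hdet1 : (τ ^ 2 • (1 : Matrix (Fin n) (Fin n) ℝ)).det = (τ ^ 2) ^ n := by
      simp [Matrix.det_smul, Fintype.card_fin]
    have h1 : ContinuousAt Ring.inverse (τ ^ 2 • (1 : Matrix (Fin n) (Fin n) ℝ)).det := by
      rw [hdet1]
      have h2 : ContinuousAt (fun x : ℝ => x⁻¹) ((τ ^ 2) ^ n) := continuousAt_inv₀ hτn.ne'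
      simpa [Ring.inverse_eq_inv'] using h2
    have h2 := Filter.Tendsto.comp (continuousAt_matrix_inv _ h1) hBt
    simpa [Function.comp_def] using h2
  set Climit : ℝ := ∑ j, ∑ k, |((τ ^ 2 • (1 : Matrix (Fin n) (Fin n) ℝ))⁻¹) j k| with hCl
  have hClim : Tendsto (fun p => ∑ j, ∑ k, |(B p)⁻¹ j k|) atTop (𝓝 Climit) := by
    have hcont : Continuous fun A : Matrix (Fin n) (Fin n) ℝ => ∑ j, ∑ k, |A j k| :=
      continuous_finset_sum _ fun j _ =>
        continuous_finset_sum _ fun k _ => (continuous_id.matrix_elem j k).abs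
    exact (hcont.tendsto _).comp hinvlim
  set C : ℝ := Climit + 1 with hCdef
  have hCnonneg : 0 ≤ C := by
    have : 0 ≤ Climit :=
      Finset.sum_nonneg fun j _ => Finset.sum_nonneg fun k _ => abs_nonneg _
    linarith
  set Dmax : ℝ := (τ ^ 2) ^ n + 1 with hD
  have hDpos : 0 < Dmax := by positivity
  have hevC : ∀ᶠ p in atTop, ∑ j, ∑ k, |(B p)⁻¹ j k| ≤ C :=
    hClim.eventually (eventually_le_nhds (lt_add_one _))
  have hevD : ∀ᶠ p in atTop, (B p).det ≤ Dmax :=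
    hdetlim.eventually (eventually_le_nhds (lt_add_one _))
  -- main divergence
  rw [ENNReal.tendsto_nhds_top_iff_nat]
  intro N
  have hSpos : 0 < Real.sqrt ((2 * Real.pi) ^ n * Dmax) := by
    apply Real.sqrt_pos.2
    have := Real.pi_pos
    positivity
  set δ : ℝ := cp * Real.exp (-(2 * C)) * (Real.sqrt ((2 * Real.pi) ^ n * Dmax))⁻¹ with hδ
  have hδpos : 0 < δ := by positivity
  set K : ℝ := (N + 1) / δ with hK
  have hKpos : 0 < K := by positivity
  obtain ⟨Ti, hTi⟩ := hii K⁻¹ (inv_pos.2 hKpos)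
  filter_upwards [sqrt_tendsto_aux hsdiv (max T₀ Ti), hevC, hevD] with p hps hpC hpD
  set r : ℝ := Real.sqrt (s p) with hr
  have hr0 : 0 < r := Real.sqrt_pos.2 (hs p)
  have hTr : ∀ j, T j ≤ r := fun j => le_trans (le_trans (hT₀ j) (le_max_left _ _)) hps
  have hTir : Ti ≤ r := le_trans (le_max_right _ _) hps
  set l : Fin n → ℝ := fun j => if up j then r else -(2 * r) with hl
  set box : Set (Fin n → ℝ) := Set.univ.pi fun j => Set.Icc (l j) (l j + r) with hbox
  have hboxm : MeasurableSet box := MeasurableSet.univ_pi fun j => measurableSet_Icc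
  have hvol : volume box = ENNReal.ofReal r ^ n := by
    rw [hbox, volume_pi_pi]
    have hxx : ∀ j : Fin n, volume (Set.Icc (l j) (l j + r)) = ENNReal.ofReal r := by
      intro j
      rw [Real.volume_Icc, add_sub_cancel_left]
    simp [hxx]
  -- basic facts about box members
  have hmem : ∀ η : Fin n → ℝ, η ∈ box → ∀ j, l j ≤ η j ∧ η j ≤ l j + r := by
    intro η hη j
    have := hη j (Set.mem_univ j)
    exact ⟨this.1, this.2⟩
  have habs : ∀ η : Fin n → ℝ, η ∈ box → ∀ j, |η j| ≤ 2 * r := by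
    intro η hη j
    obtain ⟨h1, h2⟩ := hmem η hη j
    rw [abs_le]
    by_cases hu : up j
    · simp only [hl, if_pos hu] at h1 h2
      constructor <;> linarith
    · simp only [hl, if_neg hu] at h1 h2
      constructor <;> linarith
  have hcond : ∀ η : Fin n → ℝ, η ∈ box → ∀ j,
      (if up j then T j ≤ η j else η j ≤ -(T j)) := by
    intro η hη j
    obtain ⟨h1, h2⟩ := hmem η hη j
    by_cases hu : up j
    · simp only [hl, if_pos hu] at h1 h2
      rw [if_pos hu]
      linarith [hTr j]
    · simp only [hl, if_neg hu] at h1 h2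
      rw [if_neg hu]
      linarith [hTr j]
  have hcondi : ∀ η : Fin n → ℝ, η ∈ box →
      (if up i then Ti ≤ η i else η i ≤ -Ti) := by
    intro η hη
    obtain ⟨h1, h2⟩ := hmem η hη i
    by_cases hu : up i
    · simp only [hl, if_pos hu] at h1 h2
      rw [if_pos hu]
      linarith
    · simp only [hl, if_neg hu] at h1 h2
      rw [if_neg hu]
      linarith
  -- per-p matrix facts
  have hdetB : 0 < (B p).det := (hB p).det_pos
  haveI : Invertible (s p) := invertibleOfNonzero (hs p).ne'
  have hinv_smul : (s p • B p)⁻¹ = (s p)⁻¹ • (B p)⁻¹ := by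
    apply Matrix.inv_eq_left_inv
    rw [Matrix.smul_mul, Matrix.mul_smul, Matrix.nonsing_inv_mul _ (Ne.isUnit hdetB.ne'),
      smul_smul, inv_mul_cancel₀ (hs p).ne', one_smul]
  have hdet_eq : (s p • B p).det = s p ^ n * (B p).det := by
    rw [Matrix.det_smul]
    simp [Fintype.card_fin]
  set Klow : ℝ := K * cp *
      ((Real.sqrt ((2 * Real.pi) ^ n * (s p ^ n * Dmax)))⁻¹ * Real.exp (-(2 * C))) with hKlow
  have hargpos : (0 : ℝ) < (2 * Real.pi) ^ n * (s p ^ n * Dmax) := by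
    have h1 := Real.pi_pos
    have h2 := hs p
    positivity
  have hKlowpos : 0 < Klow := by
    apply mul_pos (mul_pos hKpos hcp)
    exact mul_pos (inv_pos.2 (Real.sqrt_pos.2 hargpos)) (Real.exp_pos _)
  -- pointwise bound on the box
  have hpoint : ∀ η ∈ box, Klow ≤ (g i (η i))⁻¹ *
      (∏ j ∈ Finset.univ.erase i, g j (η j)) * gaussDensity (s p • B p) η := by
    intro η hη
    have h1 : K ≤ (g i (η i))⁻¹ := by
      have hgK : g i (η i) ≤ K⁻¹ := hTi (η i) (hcondi η hη)
      calc K = (K⁻¹)⁻¹ := (inv_inv K).symm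
        _ ≤ (g i (η i))⁻¹ := inv_anti₀ (hg0 i (η i)) hgK
    have h2 : cp ≤ ∏ j ∈ Finset.univ.erase i, g j (η j) := by
      apply Finset.prod_le_prod (fun j _ => (hcpos j).le)
      intro j hj
      exact hcbound j (Finset.mem_erase.1 hj).1 (η j) (hcond η hη j)
    have h3 : (Real.sqrt ((2 * Real.pi) ^ n * (s p ^ n * Dmax)))⁻¹ * Real.exp (-(2 * C)) ≤
        gaussDensity (s p • B p) η := by
      rw [gaussDensity]
      have hd1 : (0 : ℝ) < (2 * Real.pi) ^ n * (s p • B p).det := by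
        have h1 := Real.pi_pos
        have h2 : 0 < (s p • B p).det := by
          rw [hdet_eq]
          exact mul_pos (pow_pos (hs p) n) hdetB
        positivity
      refine mul_le_mul ?_ ?_ (Real.exp_pos _).le (inv_nonneg.2 (Real.sqrt_nonneg _))
      · apply inv_anti₀ (Real.sqrt_pos.2 hd1)
        apply Real.sqrt_le_sqrt
        rw [hdet_eq]
        have hpi : (0 : ℝ) < (2 * Real.pi) ^ n := by
          have := Real.pi_pos
          positivity
        have hsn : (0 : ℝ) < s p ^ n := pow_pos (hs p) n
        nlinarith [mul_le_mul_of_nonneg_left hpD hsn.le]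
      · rw [Real.exp_le_exp]
        have hQ : η ⬝ᵥ (s p • B p)⁻¹.mulVec η ≤ 4 * C := by
          rw [hinv_smul, Matrix.smul_mulVec, dotProduct_smul, smul_eq_mul]
          have hqb := quad_form_bound (B p)⁻¹ η (2 * r) (by positivity) (habs η hη)
          calc (s p)⁻¹ * (η ⬝ᵥ (B p)⁻¹.mulVec η)
              ≤ (s p)⁻¹ * ((2 * r) ^ 2 * ∑ j, ∑ k, |(B p)⁻¹ j k|) :=
                mul_le_mul_of_nonneg_left hqb (inv_nonneg.2 (hs p).le)
            _ = 4 * (∑ j, ∑ k, |(B p)⁻¹ j k|) * ((s p)⁻¹ * s p) := by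
                rw [show (2 * r) ^ 2 = 4 * r ^ 2 by ring, hr, Real.sq_sqrt (hs p).le]
                ring
            _ = 4 * (∑ j, ∑ k, |(B p)⁻¹ j k|) := by
                rw [inv_mul_cancel₀ (hs p).ne']
                ring
            _ ≤ 4 * C := by linarith
        linarith
    calc Klow = (K * cp) *
        ((Real.sqrt ((2 * Real.pi) ^ n * (s p ^ n * Dmax)))⁻¹ * Real.exp (-(2 * C))) := by
          rw [hKlow]
      _ ≤ ((g i (η i))⁻¹ * (∏ j ∈ Finset.univ.erase i, g j (η j))) *
          gaussDensity (s p • B p) η := by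
          apply mul_le_mul (mul_le_mul h1 h2 hcp.le (le_trans hKpos.le h1))
            h3 (mul_nonneg (inv_nonneg.2 (Real.sqrt_nonneg _)) (Real.exp_pos _).le)
          exact mul_nonneg (le_trans hKpos.le h1)
            (le_trans hcp.le h2)
      _ = _ := by ring
  -- integral lower bound
  have hineq : ENNReal.ofReal Klow * volume box ≤ ∫⁻ η : Fin n → ℝ,
      ENNReal.ofReal ((g i (η i))⁻¹ * (∏ j ∈ Finset.univ.erase i, g j (η j)) *
        gaussDensity (s p • B p) η) := by
    rw [← lintegral_indicator_const hboxm]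
    apply lintegral_mono
    intro η
    by_cases hη : η ∈ box
    · rw [Set.indicator_of_mem hη]
      exact ENNReal.ofReal_le_ofReal (hpoint η hη)
    · rw [Set.indicator_of_notMem hη]
      exact zero_le
  refine lt_of_lt_of_le ?_ hineq
  rw [hvol, ← ENNReal.ofReal_pow hr0.le, ← ENNReal.ofReal_mul hKlowpos.le]
  -- the real computation
  have hsqn : Real.sqrt (s p ^ n) = r ^ n := by
    rw [Real.sqrt_eq_iff_eq_sq (pow_pos (hs p) n).le (pow_pos hr0 n).le]
    rw [← pow_mul, mul_comm n 2, pow_mul, hr, Real.sq_sqrt (hs p).le]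
  have hsplit : Real.sqrt ((2 * Real.pi) ^ n * (s p ^ n * Dmax)) =
      r ^ n * Real.sqrt ((2 * Real.pi) ^ n * Dmax) := by
    rw [show (2 * Real.pi) ^ n * (s p ^ n * Dmax) = s p ^ n * ((2 * Real.pi) ^ n * Dmax) by ring,
      Real.sqrt_mul (pow_pos (hs p) n).le, hsqn]
  have hfinal : Klow * r ^ n = (N : ℝ) + 1 := by
    have hrn : (0 : ℝ) < r ^ n := pow_pos hr0 n
    rw [hKlow, hsplit, hK, hδ]
    field_simp
  rw [hfinal]
  have : ((N : ℝ≥0∞)) = ENNReal.ofReal (N : ℝ) := by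
    simp [ENNReal.ofReal_natCast]
  rw [this]
  exact ENNReal.ofReal_lt_ofReal_iff (by positivity) |>.2 (lt_add_one _)
end
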